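/- Let (X,≼) be a Debreu separable partial order. Then (X,≼) has a multi-utility consisting of two functions if and only if it has a Debreu separable realizer consisting of two linear extensions. -/
import Mathlib


/-- A binary relation is a partial order: reflexive, antisymmetric, transitive. -/
def IsPartialOrderRel {X : Type*} (r : X → X → Prop) : Prop :=
  (∀ x, r x x) ∧ (∀ x y, r x y → r y x → x = y) ∧ (∀ x y z, r x y → r y z → r x z)

/-- `r'` extends `r`. -/
def RelExtends {X : Type*} (r r' : X → X → Prop) : Prop :=
  ∀ x y, r x y → r' x y

/-- `r` is total: any two elements are comparable. -/
def TotalRel {X : Type*} (r : X → X → Prop) : Prop :=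
  ∀ x y, r x y ∨ r y x

/-- `r'` is a linear extension of `r`: a total partial order extending `r`. -/
def IsLinearExtension {X : Type*} (r r' : X → X → Prop) : Prop :=
  IsPartialOrderRel r' ∧ TotalRel r' ∧ RelExtends r r'

/-- `x` and `y` are incomparable with respect to `r`. -/
def Incomp {X : Type*} (r : X → X → Prop) (x y : X) : Prop :=
  ¬ r x y ∧ ¬ r y x

/-- `D` is Debreu dense for `r`. -/
def DebreuDense {X : Type*} (r : X → X → Prop) (D : Set X) : Prop :=
  ∀ x y, r x y → ¬ r y x → ∃ d ∈ D, r x d ∧ r d y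

/-- `(X, r)` is Debreu separable: it has a countable Debreu dense subset. -/
def DebreuSeparable {X : Type*} (r : X → X → Prop) : Prop :=
  ∃ D : Set X, D.Countable ∧ DebreuDense r D

/-- The limit of a sequence of binary relations. -/
def LimitRel {X : Type*} (r : ℕ → X → X → Prop) : X → X → Prop :=
  fun x y => ∃ n₀ : ℕ, ∀ n, n₀ ≤ n → r n x y

section Aux
variable {X : Type*}

def LexRel (f g : X → ℝ) (x y : X) : Prop :=
  f x < f y ∨ (f x = f y ∧ g x ≤ g y)

lemma lexRel_le {f g : X → ℝ} {x y : X} (h : LexRel f g x y) : f x ≤ f y :=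
  h.elim le_of_lt (fun h => h.1.le)

lemma lexRel_extends {r : X → X → Prop} {f g : X → ℝ}
    (h : ∀ x y, r x y → f x ≤ f y ∧ g x ≤ g y) :
    RelExtends r (LexRel f g) := by
  intro a b hab
  obtain ⟨h1, h2⟩ := h a b hab
  rcases h1.lt_or_eq with h1 | h1
  · exact Or.inl h1
  · exact Or.inr ⟨h1, h2⟩

lemma lexRel_linearExtension {r : X → X → Prop} (hr : IsPartialOrderRel r)
    {f g : X → ℝ} (h : ∀ x y, r x y ↔ f x ≤ f y ∧ g x ≤ g y) :
    IsLinearExtension r (LexRel f g) := by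
  refine ⟨⟨?_, ?_, ?_⟩, ?_, lexRel_extends (fun x y hxy => (h x y).1 hxy)⟩
  · intro x; exact Or.inr ⟨rfl, le_rfl⟩
  · rintro x y (h1 | ⟨h1, h1'⟩) (h2 | ⟨h2, h2'⟩)
    · exact absurd (h1.trans h2) (lt_irrefl _)
    · exact absurd h1 (by rw [h2]; exact lt_irrefl _)
    · exact absurd h2 (by rw [h1]; exact lt_irrefl _)
    · exact hr.2.1 x y ((h x y).2 ⟨h1.le, h1'⟩) ((h y x).2 ⟨h2.le, h2'⟩)
  · rintro x y z (h1 | ⟨h1, h1'⟩) (h2 | ⟨h2, h2'⟩)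
    · exact Or.inl (h1.trans h2)
    · exact Or.inl (lt_of_lt_of_le h1 h2.le)
    · exact Or.inl (lt_of_le_of_lt h1.le h2)
    · exact Or.inr ⟨h1.trans h2, h1'.trans h2'⟩
  · intro x y
    rcases lt_trichotomy (f x) (f y) with hlt | heq | hgt
    · exact Or.inl (Or.inl hlt)
    · rcases le_total (g x) (g y) with hg | hg
      · exact Or.inl (Or.inr ⟨heq, hg⟩)
      · exact Or.inr (Or.inr ⟨heq.symm, hg⟩)
    · exact Or.inr (Or.inl hgt)

def FiberMaxGap (f g : X → ℝ) (q : ℚ) (x : X) : Prop :=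
  ∃ y, f x < (q : ℝ) ∧ (q : ℝ) < f y ∧ (∀ z, ¬(f x < f z ∧ f z < f y)) ∧
    (∀ w, f w = f x → g w ≤ g x)

lemma fiberMaxGap_unique {r : X → X → Prop} (hr : IsPartialOrderRel r)
    {f g : X → ℝ} (h : ∀ x y, r x y ↔ f x ≤ f y ∧ g x ≤ g y) {q : ℚ} {x x' : X}
    (hx : FiberMaxGap f g q x) (hx' : FiberMaxGap f g q x') : x = x' := by
  obtain ⟨y, hxq, hqy, hgap, hmax⟩ := hx
  obtain ⟨y', hxq', hqy', hgap', hmax'⟩ := hx'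
  have hfe : f x = f x' := by
    by_contra hne
    rcases lt_or_gt_of_ne hne with hlt | hlt
    · exact hgap x' ⟨hlt, hxq'.trans hqy⟩
    · exact hgap' x ⟨hlt, hxq.trans hqy'⟩
  have h1 : g x' ≤ g x := hmax x' hfe.symm
  have h2 : g x ≤ g x' := hmax' x hfe
  exact hr.2.1 x x' ((h x x').2 ⟨hfe.le, h2⟩) ((h x' x).2 ⟨hfe.ge, h1⟩)

lemma lexRel_debreuSeparable {r : X → X → Prop} (hr : IsPartialOrderRel r)
    (hsep : DebreuSeparable r) {f g : X → ℝ}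
    (h : ∀ x y, r x y ↔ f x ≤ f y ∧ g x ≤ g y) :
    DebreuSeparable (LexRel f g) := by
  classical
  rcases isEmpty_or_nonempty X with hX | hX
  · exact ⟨∅, Set.countable_empty, fun x => isEmptyElim x⟩
  obtain ⟨D0, hD0c, hD0⟩ := hsep
  have hext : RelExtends r (LexRel f g) := lexRel_extends (fun x y hxy => (h x y).1 hxy)
  have hc : ∀ p : ℚ × ℚ, ∃ z : X,
      (∃ w, (p.1 : ℝ) < f w ∧ f w < (p.2 : ℝ)) → ((p.1 : ℝ) < f z ∧ f z < (p.2 : ℝ)) := by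
    intro p
    by_cases hw : ∃ w, (p.1 : ℝ) < f w ∧ f w < (p.2 : ℝ)
    · exact ⟨hw.choose, fun _ => hw.choose_spec⟩
    · exact ⟨Classical.arbitrary X, fun hw' => absurd hw' hw⟩
  choose c hcspec using hc
  have hm : ∀ q : ℚ, ∃ z : X, (∃ w, FiberMaxGap f g q w) → FiberMaxGap f g q z := by
    intro q
    by_cases hw : ∃ w, FiberMaxGap f g q w
    · exact ⟨hw.choose, fun _ => hw.choose_spec⟩
    · exact ⟨Classical.arbitrary X, fun hw' => absurd hw' hw⟩
  choose m hmspec using hm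
  refine ⟨(D0 ∪ Set.range c) ∪ Set.range m,
    (hD0c.union (Set.countable_range c)).union (Set.countable_range m), ?_⟩
  intro x y hxy hnyx
  rcases hxy with hlt | ⟨heq, hgle⟩
  · by_cases hz : ∃ z, f x < f z ∧ f z < f y
    · obtain ⟨z, hz1, hz2⟩ := hz
      obtain ⟨p, hp1, hp2⟩ := exists_rat_btwn hz1
      obtain ⟨q, hq1, hq2⟩ := exists_rat_btwn hz2
      have hw : ∃ w, ((p, q).1 : ℝ) < f w ∧ f w < ((p, q).2 : ℝ) := ⟨z, hp2, hq1⟩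
      have hcs := hcspec (p, q) hw
      exact ⟨c (p, q), Set.mem_union_left _ (Set.mem_union_right _ ⟨(p, q), rfl⟩),
        Or.inl (hp1.trans hcs.1), Or.inl (hcs.2.trans hq2)⟩
    · by_cases hx' : ∃ x', f x' = f x ∧ g x < g x'
      · obtain ⟨x', he, hgx⟩ := hx'
        have hrxx' : r x x' := (h x x').2 ⟨he.ge, hgx.le⟩
        have hnr : ¬ r x' x := fun hn => absurd ((h x' x).1 hn).2 (not_le.mpr hgx)
        obtain ⟨d, hdD, hd1, hd2⟩ := hD0 x x' hrxx' hnr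
        have hfd : f d ≤ f x := le_trans ((h d x').1 hd2).1 he.le
        exact ⟨d, Set.mem_union_left _ (Set.mem_union_left _ hdD),
          hext _ _ hd1, Or.inl (lt_of_le_of_lt hfd hlt)⟩
      · push_neg at hx'
        push_neg at hz
        obtain ⟨q, hq1, hq2⟩ := exists_rat_btwn hlt
        have hP : FiberMaxGap f g q x :=
          ⟨y, hq1, hq2, fun z hz' => (not_lt.mpr (hz z hz'.1)) hz'.2, hx'⟩
        have hPq : ∃ w, FiberMaxGap f g q w := ⟨x, hP⟩
        have hmx : m q = x := fiberMaxGap_unique hr h (hmspec q hPq) hP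
        exact ⟨m q, Set.mem_union_right _ ⟨q, rfl⟩,
          by rw [hmx]; exact Or.inr ⟨rfl, le_rfl⟩, by rw [hmx]; exact Or.inl hlt⟩
  · have hglt : g x < g y := not_le.mp (fun hgyx => hnyx (Or.inr ⟨heq.symm, hgyx⟩))
    have hrxy : r x y := (h x y).2 ⟨heq.le, hglt.le⟩
    have hnr : ¬ r y x := fun hyx => absurd ((h y x).1 hyx).2 (not_le.mpr hglt)
    obtain ⟨d, hdD, hd1, hd2⟩ := hD0 x y hrxy hnr
    exact ⟨d, Set.mem_union_left _ (Set.mem_union_left _ hdD), hext _ _ hd1, hext _ _ hd2⟩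

lemma utility_of_total {R : X → X → Prop} (hpo : IsPartialOrderRel R) (htot : TotalRel R)
    (hsep : DebreuSeparable R) : ∃ u : X → ℝ, ∀ x y, R x y ↔ u x ≤ u y := by
  classical
  obtain ⟨D, hDc, hDd⟩ := hsep
  obtain ⟨e, he⟩ := Set.countable_iff_exists_injective.mp hDc
  set w : D → ℝ := fun d => (1 / 2 : ℝ) ^ (e d : ℕ) with hwdef
  have hwpos : ∀ d, 0 < w d := fun d => pow_pos (by norm_num) _
  have hwsum : Summable w := by
    have : Summable (fun n : ℕ => (1 / 2 : ℝ) ^ n) :=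
      summable_geometric_of_lt_one (by norm_num) (by norm_num)
    exact this.comp_injective he
  set t : X → D → ℝ := fun x d =>
    (if R d x then w d else 0) + (if R (d : X) x ∧ ¬ R x d then w d else 0) with htdef
  have htnn : ∀ x d, 0 ≤ t x d := by
    intro x d
    apply add_nonneg <;> split_ifs <;> simp [le_of_lt (hwpos d)]
  have htle : ∀ x d, t x d ≤ w d + w d := by
    intro x d
    apply add_le_add <;> split_ifs <;> simp [le_of_lt (hwpos d)]
  have hts : ∀ x, Summable (t x) := fun x =>
    Summable.of_nonneg_of_le (htnn x) (htle x) (hwsum.add hwsum)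
  have hmono : ∀ x y, R x y → ∀ d, t x d ≤ t y d := by
    intro x y hxy d
    apply add_le_add
    · split_ifs with h1 h2
      · exact le_rfl
      · exact absurd (hpo.2.2 _ _ _ h1 hxy) h2
      · exact le_of_lt (hwpos d)
      · exact le_rfl
    · split_ifs with h1 h2
      · exact le_rfl
      · exact absurd ⟨hpo.2.2 _ _ _ h1.1 hxy, fun hyd => h1.2 (hpo.2.2 _ _ _ hxy hyd)⟩ h2
      · exact le_of_lt (hwpos d)
      · exact le_rfl
  refine ⟨fun x => ∑' d, t x d, fun x y => ⟨fun hxy => Summable.tsum_le_tsum (hmono x y hxy) (hts x) (hts y), ?_⟩⟩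
  intro hle
  by_contra hnxy
  have hyx : R y x := (htot x y).resolve_left hnxy
  obtain ⟨d, hdD, hd1, hd2⟩ := hDd y x hyx hnxy
  have hstrict : t y ⟨d, hdD⟩ < t x ⟨d, hdD⟩ := by
    by_cases hdy : R d y
    · have hdy' : d = y := hpo.2.1 _ _ hdy hd1
      have hxd : ¬ R x d := by rw [hdy']; exact hnxy
      have e1 : t y ⟨d, hdD⟩ = w ⟨d, hdD⟩ := by simp [htdef, hdy, hd1]
      have e2 : t x ⟨d, hdD⟩ = w ⟨d, hdD⟩ + w ⟨d, hdD⟩ := by simp [htdef, hd2, hxd]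
      rw [e1, e2]
      linarith [hwpos ⟨d, hdD⟩]
    · have e1 : t y ⟨d, hdD⟩ = 0 := by simp [htdef, hdy]
      have e2 : w ⟨d, hdD⟩ ≤ t x ⟨d, hdD⟩ := by
        simp only [htdef, if_pos hd2]
        have : (0:ℝ) ≤ if R d x ∧ ¬ R x d then w ⟨d, hdD⟩ else 0 := by
          split_ifs
          · exact le_of_lt (hwpos _)
          · exact le_rfl
        linarith
      rw [e1]
      exact lt_of_lt_of_le (hwpos _) e2
  have := Summable.tsum_lt_tsum (hmono y x hyx) hstrict (hts y) (hts x)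
  linarith

end Aux

theorem debreuSeparable_multiUtility_two_iff_debreuSeparableRealizer_two {X : Type*}
    (r : X → X → Prop) (hr : IsPartialOrderRel r)
    (hsep : DebreuSeparable r) :
    (∃ u : Fin 2 → X → ℝ, ∀ x y, r x y ↔ ∀ i, u i x ≤ u i y) ↔
    (∃ R : Fin 2 → X → X → Prop,
      (∀ i, IsLinearExtension r (R i) ∧ DebreuSeparable (R i)) ∧
      (∀ x y, r x y ↔ ∀ i, R i x y)) := by
  constructor
  · rintro ⟨u, hu⟩
    have h' : ∀ x y, r x y ↔ u 0 x ≤ u 0 y ∧ u 1 x ≤ u 1 y := by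
      intro x y; rw [hu x y, Fin.forall_fin_two]
    have h'' : ∀ x y, r x y ↔ u 1 x ≤ u 1 y ∧ u 0 x ≤ u 0 y :=
      fun x y => (h' x y).trans and_comm
    refine ⟨![LexRel (u 0) (u 1), LexRel (u 1) (u 0)], ?_, ?_⟩
    · intro i
      fin_cases i
      · exact ⟨lexRel_linearExtension hr h', lexRel_debreuSeparable hr hsep h'⟩
      · exact ⟨lexRel_linearExtension hr h'', lexRel_debreuSeparable hr hsep h''⟩
    · intro x y
      rw [Fin.forall_fin_two]
      constructor
      · intro hxy
        exact ⟨lexRel_extends (fun a b hab => (h' a b).1 hab) _ _ hxy,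
          lexRel_extends (fun a b hab => (h'' a b).1 hab) _ _ hxy⟩
      · rintro ⟨hA, hB⟩
        exact (h' x y).2 ⟨lexRel_le hA, lexRel_le hB⟩
  · rintro ⟨R, hR1, hR2⟩
    have hu : ∀ i : Fin 2, ∃ u : X → ℝ, ∀ x y, R i x y ↔ u x ≤ u y := fun i =>
      utility_of_total (hR1 i).1.1 (hR1 i).1.2.1 (hR1 i).2
    choose u hu using hu
    exact ⟨u, fun x y => (hR2 x y).trans (forall_congr' fun i => hu i x y)⟩
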